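/- Let s: ℝ → ℝ be a continuous spline with breakpoints b₁ < ... < b_{k−1} that agrees with polynomial P₁ on (−∞, b₁], with Pᵢ on [bᵢ₋₁, bᵢ] for 1 < i < k, and with P_k on [b_{k−1}, ∞). Then for all x ∈ ℝ, s(x) = P₁(x) + Σ_{i=1}^{k−1} (Pᵢ₊₁^{bᵢ} − Pᵢ^{bᵢ})(ReLU(x − bᵢ)), where P^b(y) = P(y + b). -/
import Mathlib


/-- a continuous spline with breakpoints b₀ < ... < b_{m-1}, agreeing with
polynomial `P i` on the i-th segment, equals
P₀(x) + Σᵢ (P_{i+1}^{bᵢ} − P_i^{bᵢ})(ReLU(x − bᵢ)), where P^b(y) = P(y + b). -/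
theorem stmt17 (m : ℕ) (b : Fin m → ℝ) (P : Fin (m + 1) → Polynomial ℝ) (s : ℝ → ℝ)
    (hb : StrictMono b)
    (hcontinuity : ∀ i : Fin m, (P i.castSucc).eval (b i) = (P i.succ).eval (b i))
    (hseg : ∀ i : Fin (m + 1), ∀ x : ℝ,
      (∀ j : Fin m, (j : ℕ) < (i : ℕ) → b j ≤ x) →
      (∀ j : Fin m, (i : ℕ) ≤ (j : ℕ) → x ≤ b j) →
      s x = (P i).eval x) :
    ∀ x : ℝ,
      s x = (P 0).eval x + ∑ i : Fin m,
        ((P i.succ).eval (max (x - b i) 0 + b i) - (P i.castSucc).eval (max (x - b i) 0 + b i)) := by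
  intro x
  classical
  set S : Finset (Fin m) := Finset.univ.filter (fun j => b j ≤ x) with hSdef
  set n : ℕ := if h : S.Nonempty then ((S.max' h : Fin m) : ℕ) + 1 else 0 with hndef
  have key : ∀ j : Fin m, (b j ≤ x ↔ (j : ℕ) < n) := by
    intro j
    constructor
    · intro hj
      have hjS : j ∈ S := by simp [hSdef, hj]
      have hne : S.Nonempty := ⟨j, hjS⟩
      have hle := S.le_max' j hjS
      rw [Fin.le_def] at hle
      rw [hndef, dif_pos hne]
      omega
    · intro hj
      by_cases hne : S.Nonempty
      · rw [hndef, dif_pos hne] at hj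
        have hle : j ≤ S.max' hne := by
          rw [Fin.le_def]; omega
        have h1 : b j ≤ b (S.max' hne) := hb.monotone hle
        have h2 : b (S.max' hne) ≤ x := by
          have := S.max'_mem hne
          simpa [hSdef] using this
        linarith
      · rw [hndef, dif_neg hne] at hj
        omega
  have hn : n ≤ m := by
    by_cases hne : S.Nonempty
    · rw [hndef, dif_pos hne]
      exact (S.max' hne).isLt
    · rw [hndef, dif_neg hne]; omega
  have hnm : n < m + 1 := Nat.lt_succ_of_le hn
  have hsx : s x = (P ⟨n, hnm⟩).eval x := by
    apply hseg ⟨n, hnm⟩ x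
    · intro j hj; exact (key j).mpr hj
    · intro j hj
      have hnb : ¬ b j ≤ x := fun h => by have := (key j).mp h; simp at hj; omega
      linarith [lt_of_not_ge hnb]
  have hFlt : ∀ t : ℕ, min t n < m + 1 :=
    fun t => Nat.lt_succ_of_le (le_trans (min_le_right _ _) hn)
  set F : ℕ → ℝ := fun t => (P ⟨min t n, hFlt t⟩).eval x with hFdef
  have hterm : ∀ j : Fin m,
      (P j.succ).eval (max (x - b j) 0 + b j) - (P j.castSucc).eval (max (x - b j) 0 + b j)
        = F ((j:ℕ)+1) - F (j:ℕ) := by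
    intro j
    by_cases hj : (j:ℕ) < n
    · have hbj : b j ≤ x := (key j).mpr hj
      have hmax : max (x - b j) 0 + b j = x := by
        rw [max_eq_left (by linarith)]; ring
      rw [hmax]
      have h1 : (⟨min ((j:ℕ)+1) n, hFlt _⟩ : Fin (m+1)) = j.succ := by
        apply Fin.ext; simp [Fin.val_succ]; omega
      have h2 : (⟨min (j:ℕ) n, hFlt _⟩ : Fin (m+1)) = j.castSucc := by
        apply Fin.ext; simp [Fin.coe_castSucc]; omega
      rw [hFdef]
      simp only [h1, h2]
    · have hbj : ¬ b j ≤ x := fun h => hj ((key j).mp h)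
      have hxb : x < b j := lt_of_not_ge hbj
      have hmax : max (x - b j) 0 + b j = b j := by
        rw [max_eq_right (by linarith)]; ring
      have hmin : min ((j:ℕ)+1) n = min (j:ℕ) n := by omega
      rw [hmax, hcontinuity j, hFdef]
      simp only [hmin]
      ring
  have hsum : ∑ j : Fin m,
      ((P j.succ).eval (max (x - b j) 0 + b j) - (P j.castSucc).eval (max (x - b j) 0 + b j))
        = F m - F 0 := by
    rw [Finset.sum_congr rfl (fun j _ => hterm j),
      Fin.sum_univ_eq_sum_range (fun i => F (i+1) - F i) m,
      Finset.sum_range_sub F m]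
  have hFm : F m = (P ⟨n, hnm⟩).eval x := by
    rw [hFdef]; simp only [min_eq_right hn]
  have hF0 : F 0 = (P 0).eval x := by
    have h0 : (⟨min 0 n, hFlt 0⟩ : Fin (m+1)) = 0 := by
      apply Fin.ext; simp
    rw [hFdef]; simp only [h0]
  rw [hsum, hFm, hF0, hsx]
  ring
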